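/- Let G, U be as above (unimodular, U irreducible square-integrable, orthogonality constant 1). If T₁ and T₂ are positive trace-one operators on H such that ∫_X U(g)T₁U(g)⁻¹ dμ_G(g) = ∫_X U(g)T₂U(g)⁻¹ dμ_G(g) (weakly) for every Borel set X ⊆ G, then T₁ = T₂. -/

import Mathlib

open MeasureTheory Complex

noncomputable section

/-- Auxiliary: if `g ↦ U g v` is continuous for each fixed `v` and each `U g` is an isometry,
then `g ↦ U g (c g)` is continuous for a continuous `c`. -/
lemma stmt15_aux_cont {G : Type*} [TopologicalSpace G]
    {H : Type*} [NormedAddCommGroup H] [InnerProductSpace ℂ H]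
    (U : G → (H ≃ₗᵢ[ℂ] H))
    (hcont : ∀ v : H, Continuous fun g => U g v)
    {c : G → H} (hc : Continuous c) :
    Continuous fun g => U g (c g) := by
  rw [continuous_iff_continuousAt]
  intro g₀
  have h1 : Filter.Tendsto (fun g => U g (c g) - U g (c g₀)) (nhds g₀) (nhds 0) := by
    rw [tendsto_zero_iff_norm_tendsto_zero]
    have hnorm : ∀ g, ‖U g (c g) - U g (c g₀)‖ = ‖c g - c g₀‖ := by
      intro g
      rw [← map_sub, (U g).norm_map]
    simp only [hnorm]
    have : Filter.Tendsto (fun g => c g - c g₀) (nhds g₀) (nhds (c g₀ - c g₀)) :=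
      (hc.tendsto g₀).sub tendsto_const_nhds
    rw [sub_self] at this
    exact (tendsto_zero_iff_norm_tendsto_zero.mp this)
  have h2 : Filter.Tendsto (fun g => U g (c g₀)) (nhds g₀) (nhds (U g₀ (c g₀))) :=
    (hcont (c g₀)).tendsto g₀
  have h3 := h1.add h2
  rw [zero_add] at h3
  exact h3.congr fun g => by abel

/-- in the same setting as the previous statement (unimodular `G`, irreducible
square-integrable `U`), the correspondence `T ↦ E_T` is injective: if the weak integrals
`∫_X U(g) Tᵢ U(g)⁻¹ dμ(g)` coincide for all Borel `X`, then `T₁ = T₂`. -/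
theorem stmt15 {G : Type*} [Group G] [TopologicalSpace G] [IsTopologicalGroup G]
    [LocallyCompactSpace G] [SecondCountableTopology G] [T2Space G]
    [MeasurableSpace G] [BorelSpace G]
    (μ : Measure G) [μ.IsHaarMeasure] [μ.IsMulRightInvariant]
    {H : Type*} [NormedAddCommGroup H] [InnerProductSpace ℂ H] [CompleteSpace H]
    [TopologicalSpace.SeparableSpace H]
    (U : G → (H ≃ₗᵢ[ℂ] H))
    (hgrp : ∀ g g' : G, U (g * g') = (U g').trans (U g))
    (hcont : ∀ v : H, Continuous fun g => U g v)
    (hirr : ∀ K : Submodule ℂ H, IsClosed (K : Set H) →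
      (∀ g : G, ∀ v ∈ K, U g v ∈ K) → K = ⊥ ∨ K = ⊤)
    (hsq : ∀ u v : H, ∫ g, ‖(inner ℂ (U g u) v : ℂ)‖ ^ 2 ∂μ = ‖u‖ ^ 2 * ‖v‖ ^ 2)
    (T₁ T₂ : H →L[ℂ] H)
    (lam₁ lam₂ : ℕ → ℝ) (e₁ e₂ : ℕ → H)
    (hlam₁ : ∀ n, 0 ≤ lam₁ n) (hON₁ : Orthonormal ℂ e₁) (htr₁ : HasSum lam₁ 1)
    (hT₁ : ∀ v : H, HasSum (fun n => ((lam₁ n : ℂ) * (inner ℂ (e₁ n) v : ℂ)) • e₁ n) (T₁ v))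
    (hlam₂ : ∀ n, 0 ≤ lam₂ n) (hON₂ : Orthonormal ℂ e₂) (htr₂ : HasSum lam₂ 1)
    (hT₂ : ∀ v : H, HasSum (fun n => ((lam₂ n : ℂ) * (inner ℂ (e₂ n) v : ℂ)) • e₂ n) (T₂ v))
    (heq : ∀ X : Set G, MeasurableSet X → ∀ u v : H,
      (∫ g in X, (inner ℂ u (U g (T₁ ((U g).symm v))) : ℂ) ∂μ) =
      (∫ g in X, (inner ℂ u (U g (T₂ ((U g).symm v))) : ℂ) ∂μ)) :
    T₁ = T₂ := by
  -- `U 1 = id`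
  have hUone : ∀ v : H, U 1 v = v := by
    intro v
    have h := hgrp 1 1
    rw [one_mul] at h
    have : U 1 v = U 1 (U 1 v) := by
      conv_lhs => rw [h]
      rfl
    exact ((U 1).injective this.symm)
  -- fix u v; consider the two continuous integrands
  ext v
  refine ext_inner_left ℂ ?_
  intro u
  set f : G → ℂ := fun g => (inner ℂ u (U g (T₁ ((U g).symm v))) : ℂ) with hf
  set h : G → ℂ := fun g => (inner ℂ u (U g (T₂ ((U g).symm v))) : ℂ) with hh
  -- continuity of the symm map
  have hsymm_cont : Continuous fun g => (U g).symm v := by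
    have key : ∀ g : G, (U g).symm v = U g⁻¹ v := by
      intro g
      refine (U g).injective ?_
      rw [(U g).apply_symm_apply]
      have hginv : U (g * g⁻¹) v = U g (U g⁻¹ v) := by rw [hgrp]; rfl
      rw [mul_inv_cancel] at hginv
      rw [← hginv, hUone]
    simp only [key]
    exact (hcont v).comp continuous_inv
  have hfc : ∀ (T : H →L[ℂ] H), Continuous fun g => (inner ℂ u (U g (T ((U g).symm v))) : ℂ) := by
    intro T
    have hc1 : Continuous fun g => T ((U g).symm v) := T.continuous.comp hsymm_cont
    have hc2 : Continuous fun g => U g (T ((U g).symm v)) := stmt15_aux_cont U hcont hc1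
    exact (continuous_const.inner hc2)
  have hfcont : Continuous f := hfc T₁
  have hhcont : Continuous h := hfc T₂
  -- boundedness and integrability on finite-measure sets
  have hbdd : ∀ (T : H →L[ℂ] H) (g : G),
      ‖(inner ℂ u (U g (T ((U g).symm v))) : ℂ)‖ ≤ ‖u‖ * (‖T‖ * ‖v‖) := by
    intro T g
    calc ‖(inner ℂ u (U g (T ((U g).symm v))) : ℂ)‖
        ≤ ‖u‖ * ‖U g (T ((U g).symm v))‖ := norm_inner_le_norm _ _
      _ = ‖u‖ * ‖T ((U g).symm v)‖ := by rw [(U g).norm_map]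
      _ ≤ ‖u‖ * (‖T‖ * ‖v‖) := by
          refine mul_le_mul_of_nonneg_left ?_ (norm_nonneg u)
          calc ‖T ((U g).symm v)‖ ≤ ‖T‖ * ‖(U g).symm v‖ := T.le_opNorm _
            _ = ‖T‖ * ‖v‖ := by rw [(U g).symm.norm_map]
  have hint : ∀ (T : H →L[ℂ] H), ∀ s : Set G, MeasurableSet s → μ s < ⊤ →
      IntegrableOn (fun g => (inner ℂ u (U g (T ((U g).symm v))) : ℂ)) s μ := by
    intro T s hs hμs
    refine Integrable.mono' (g := fun _ => ‖u‖ * (‖T‖ * ‖v‖))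
      ((integrableOn_const_iff).mpr (Or.inr hμs)) ((hfc T).aestronglyMeasurable.restrict) ?_
    exact Filter.Eventually.of_forall fun g => hbdd T g
  -- a.e. equality from equal set integrals (σ-finite Haar measure)
  have hae : f =ᵐ[μ] h := by
    refine ae_eq_of_forall_setIntegral_eq_of_sigmaFinite
      (hint T₁) (hint T₂) ?_
    intro s hs _
    exact heq s hs u v
  -- continuity + full support ⇒ equality everywhere
  have hfh : f = h := (hfcont.ae_eq_iff_eq μ hhcont).mp hae
  have := congrFun hfh 1
  simp only [hf, hh] at this
  have h1 : (U 1).symm v = v :=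
    (U 1).injective (by rw [(U 1).apply_symm_apply, hUone])
  rw [h1, hUone, hUone] at this
  exact this
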